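/- Non-negativity part of the borrowing lemma: let A = SᵀMS be symmetric PSD with M symmetric positive definite, d_L = Sᵀe_L, d_R = Sᵀe_R, q_D = e_LᵀM⁻¹e_L = e_RᵀM⁻¹e_R, q_C = e_LᵀM⁻¹e_R, and suppose q_D² − q_C² > 0. Then for every vector v: vᵀAv ≥ (1/(q_D + |q_C|))·((vᵀd_L)² + (vᵀd_R)²). -/

import Mathlib

open Matrix

set_option maxHeartbeats 1000000 in
/-- Non-negativity part of the borrowing lemma:
`vᵀAv ≥ (1/(q_D + |q_C|))·((vᵀd_L)² + (vᵀd_R)²)` for every `v`. -/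
theorem stmt19 (n : ℕ)
    (A S M : Matrix (Fin (n+1)) (Fin (n+1)) ℝ)
    (hA : A.PosSemidef) (hM : M.PosDef)
    (hfact : A = Sᵀ * M * S)
    (eL eR : Fin (n+1) → ℝ)
    (heL : eL = fun i => if i = 0 then 1 else 0)
    (heR : eR = fun i => if i = Fin.last n then 1 else 0)
    (dL dR : Fin (n+1) → ℝ)
    (hdL : dL = Sᵀ *ᵥ eL) (hdR : dR = Sᵀ *ᵥ eR)
    (qD qC : ℝ)
    (hqD1 : eL ⬝ᵥ (M⁻¹ *ᵥ eL) = qD) (hqD2 : eR ⬝ᵥ (M⁻¹ *ᵥ eR) = qD)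
    (hqC : qC = eL ⬝ᵥ (M⁻¹ *ᵥ eR))
    (hstrict : 0 < qD^2 - qC^2) :
    ∀ v : Fin (n+1) → ℝ,
      (1 / (qD + |qC|)) * ((v ⬝ᵥ dL)^2 + (v ⬝ᵥ dR)^2) ≤ v ⬝ᵥ (A *ᵥ v) := by
  intro v
  have hdet : IsUnit M.det := isUnit_iff_ne_zero.mpr hM.det_pos.ne'
  have hMsymm : Mᵀ = M := hM.1
  have hIsymm : (M⁻¹)ᵀ = M⁻¹ := by rw [Matrix.transpose_nonsing_inv, hMsymm]
  set p : Fin (n+1) → ℝ := M⁻¹ *ᵥ eL with hp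
  set q : Fin (n+1) → ℝ := M⁻¹ *ᵥ eR with hq
  have hMp : M *ᵥ p = eL := by
    rw [hp, Matrix.mulVec_mulVec, Matrix.mul_nonsing_inv _ hdet, Matrix.one_mulVec]
  have hMq : M *ᵥ q = eR := by
    rw [hq, Matrix.mulVec_mulVec, Matrix.mul_nonsing_inv _ hdet, Matrix.one_mulVec]
  set a := v ⬝ᵥ dL with ha
  set b := v ⬝ᵥ dR with hb
  -- basic dot product facts
  have hSv_eL : (S *ᵥ v) ⬝ᵥ eL = a := by
    rw [ha, hdL, dotProduct_comm, Matrix.dotProduct_mulVec, ← Matrix.mulVec_transpose,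
      dotProduct_comm]
  have hSv_eR : (S *ᵥ v) ⬝ᵥ eR = b := by
    rw [hb, hdR, dotProduct_comm, Matrix.dotProduct_mulVec, ← Matrix.mulVec_transpose,
      dotProduct_comm]
  have hp_MSv : p ⬝ᵥ (M *ᵥ (S *ᵥ v)) = a := by
    rw [Matrix.dotProduct_mulVec, ← Matrix.mulVec_transpose, hMsymm, hMp, dotProduct_comm, hSv_eL]
  have hq_MSv : q ⬝ᵥ (M *ᵥ (S *ᵥ v)) = b := by
    rw [Matrix.dotProduct_mulVec, ← Matrix.mulVec_transpose, hMsymm, hMq, dotProduct_comm, hSv_eR]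
  have hp_eL : p ⬝ᵥ eL = qD := by rw [dotProduct_comm, hp, hqD1]
  have hq_eR : q ⬝ᵥ eR = qD := by rw [dotProduct_comm, hq, hqD2]
  have hp_eR : p ⬝ᵥ eR = qC := by
    rw [hp, dotProduct_comm, Matrix.dotProduct_mulVec, ← Matrix.mulVec_transpose, hIsymm,
      ← hq, dotProduct_comm, hqC, hq]
  have hq_eL : q ⬝ᵥ eL = qC := by
    rw [hq, dotProduct_comm, hqC, hq]
  have hSv_MSv : (S *ᵥ v) ⬝ᵥ (M *ᵥ (S *ᵥ v)) = v ⬝ᵥ (A *ᵥ v) := by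
    rw [hfact, ← Matrix.mulVec_mulVec, ← Matrix.mulVec_mulVec, Matrix.dotProduct_mulVec v,
      Matrix.vecMul_transpose]
  -- key quadratic inequality
  have key : ∀ r s : ℝ,
      0 ≤ v ⬝ᵥ (A *ᵥ v) + 2*r*a + 2*s*b + qD*r^2 + 2*qC*r*s + qD*s^2 := by
    intro r s
    have h0 := hM.posSemidef.dotProduct_mulVec_nonneg (S *ᵥ v + r • p + s • q)
    simp only [star_trivial, Matrix.mulVec_add, Matrix.mulVec_smul, hMp, hMq,
      dotProduct_add, add_dotProduct, dotProduct_smul, smul_dotProduct, smul_eq_mul,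
      hSv_eL, hSv_eR, hp_MSv, hq_MSv, hp_eL, hp_eR, hq_eL, hq_eR, hSv_MSv] at h0
    nlinarith [h0]
  -- positivity of qD
  have heLne : eL ≠ 0 := by
    rw [heL]; intro h
    have := congrFun h 0
    simp at this
  have hqDpos : 0 < qD := by
    have := hM.inv.dotProduct_mulVec_pos heLne
    rw [star_trivial, ← hp, dotProduct_comm] at this
    rw [← hp_eL, dotProduct_comm, hp]
    rwa [dotProduct_comm] at this
  have hcpos : 0 < qD + |qC| := by positivity
  set c := qD + |qC| with hc
  have h0 := key (-(a/c)) (-(b/c))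
  have hcne : c ≠ 0 := hcpos.ne'
  have h0' : 0 ≤ v ⬝ᵥ (A *ᵥ v) * c^2 - 2*a^2*c - 2*b^2*c + qD*a^2 + 2*qC*a*b + qD*b^2 := by
    have h1 : v ⬝ᵥ (A *ᵥ v) * c^2 - 2*a^2*c - 2*b^2*c + qD*a^2 + 2*qC*a*b + qD*b^2
        = c^2 * (v ⬝ᵥ (A *ᵥ v) + 2*(-(a/c))*a + 2*(-(b/c))*b + qD*(-(a/c))^2
            + 2*qC*(-(a/c))*(-(b/c)) + qD*(-(b/c))^2) := by
      field_simp
      ring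
    rw [h1]
    exact mul_nonneg (sq_nonneg c) h0
  rw [one_div, mul_comm, ← div_eq_mul_inv, div_le_iff₀ hcpos]
  nlinarith [h0', mul_nonneg (sub_nonneg.2 (le_abs_self qC)) (sq_nonneg (a+b)),
    mul_nonneg (sub_nonneg.2 (neg_abs_le qC)) (sq_nonneg (a-b)),
    mul_pos hcpos hcpos, sq_nonneg (a-b), sq_nonneg (a+b), hcpos]
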